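/- Fix n : ℕ. Let M be a Hausdorff topological space equipped with the structure of a C^∞ manifold modelled on EuclideanSpace ℝ (Fin n) (a charted space over EuclideanSpace ℝ (Fin n) satisfying IsManifold for the model 𝓡 n with smoothness ∞). Then for every finite subset s of M there exists a family of subsets (U_x)_{x ∈ s} of M such that: each U_x is open; x ∈ U_x for each x ∈ s; the sets U_x for distinct x ∈ s are pairwise disjoint; and each U_x, regarded as an open submanifold of M, is C^∞-diffeomorphic to EuclideanSpace ℝ (Fin n). -/

import Mathlib

/-!  STATEMENT 6: In a Hausdorff smooth `n`-manifold, every finite subset admits a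
family of pairwise disjoint open neighborhoods, each of which is diffeomorphic (as a
smooth manifold) to `EuclideanSpace ℝ (Fin n)`. -/

open scoped Manifold
open Set Metric TopologicalSpace OpenPartialHomeomorph IsManifold

section aux
variable {𝕜 : Type*} [NontriviallyNormedField 𝕜]
  {E : Type*} [NormedAddCommGroup E] [NormedSpace 𝕜 E] {H : Type*} [TopologicalSpace H]
  {I : ModelWithCorners 𝕜 E H} {M : Type*} [TopologicalSpace M] [ChartedSpace H M]
  {E' : Type*} [NormedAddCommGroup E'] [NormedSpace 𝕜 E'] {H' : Type*} [TopologicalSpace H']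
  {J : ModelWithCorners 𝕜 E' H'} {N : Type*} [TopologicalSpace N] [ChartedSpace H' N]
  {n : ℕ∞}

theorem contMDiff_codRestrict_opens {f : N → M} {U : Opens M} (h : ∀ y, f y ∈ U)
    (hf : ContMDiff J I n f) : ContMDiff J I n (fun y => (⟨f y, h y⟩ : U)) := by
  intro y₀
  have hf₀ := (hf y₀)
  rw [contMDiffAt_iff] at hf₀ ⊢
  have hfun : ∀ y, extChartAt I (⟨f y₀, h y₀⟩ : U) ⟨f y, h y⟩ = extChartAt I (f y₀) (f y) :=
    fun y => rfl
  exact ⟨hf₀.1.codRestrict h, hf₀.2.congr (fun z _ => hfun _) (hfun _)⟩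
end aux

theorem exists_euclidean_nbhd
    (n : ℕ) {M : Type*} [TopologicalSpace M]
    [ChartedSpace (EuclideanSpace ℝ (Fin n)) M]
    [IsManifold (𝓡 n) (⊤ : ℕ∞) M] (x : M) {V : Set M} (hV : IsOpen V) (hxV : x ∈ V) :
    ∃ O : Opens M, x ∈ O ∧ (O : Set M) ⊆ V ∧
      Nonempty (Diffeomorph (𝓡 n) (𝓡 n) O (EuclideanSpace ℝ (Fin n)) (⊤ : ℕ∞)) := by
  set E := EuclideanSpace ℝ (Fin n)
  set e := chartAt E x with he
  set W := V ∩ e.source with hW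
  have hWopen : IsOpen W := hV.inter e.open_source
  have hWsub : W ⊆ e.source := inter_subset_right
  have hxW : x ∈ W := ⟨hxV, mem_chart_source E x⟩
  have himg : IsOpen (e '' W) := e.isOpen_image_of_subset_source hWopen hWsub
  obtain ⟨r, hr, hball⟩ := Metric.isOpen_iff.mp himg (e x) ⟨x, hxW, rfl⟩
  have himgt : e '' W ⊆ e.target := fun y ⟨w, hw, hwy⟩ => hwy ▸ e.map_source (hWsub hw)
  set U₀ : Set M := W ∩ (e.source ∩ e ⁻¹' Metric.ball (e x) r) with hU₀
  have hU₀open : IsOpen U₀ := hWopen.inter (e.isOpen_inter_preimage isOpen_ball)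
  have hxU₀ : x ∈ U₀ := ⟨hxW, mem_chart_source E x, mem_ball_self hr⟩
  have hmemball : ∀ p ∈ U₀, e p ∈ Metric.ball (e x) r := fun p hp => hp.2.2
  have hsymmU₀ : ∀ y ∈ Metric.ball (e x) r, e.symm y ∈ U₀ ∧ e (e.symm y) = y := by
    intro y hy
    obtain ⟨w, hw, rfl⟩ := hball hy
    have h1 : e.symm (e w) = w := e.left_inv (hWsub hw)
    rw [h1]
    exact ⟨⟨hw, hWsub hw, hy⟩, rfl⟩
  set b := OpenPartialHomeomorph.univBall (e x) r with hb
  have hbmem : ∀ y : E, b y ∈ Metric.ball (e x) r := by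
    intro y
    rw [← OpenPartialHomeomorph.univBall_target (e x) hr]
    exact b.map_source (by rw [OpenPartialHomeomorph.univBall_source]; trivial)
  set O : Opens M := ⟨U₀, hU₀open⟩ with hO
  refine ⟨O, hxU₀, fun p hp => hp.1.1, ⟨?_⟩⟩
  have hchart : e ∈ maximalAtlas (𝓡 n) (⊤ : ℕ∞) M := chart_mem_maximalAtlas x
  refine
    { toFun := fun p => b.symm (e p.1)
      invFun := fun y => ⟨e.symm (b y), (hsymmU₀ (b y) (hbmem y)).1⟩
      left_inv := ?_
      right_inv := ?_
      contMDiff_toFun := ?_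
      contMDiff_invFun := ?_ }
  · rintro ⟨p, hp⟩
    have h1 : b (b.symm (e p)) = e p := by
      apply b.right_inv
      rw [OpenPartialHomeomorph.univBall_target (e x) hr]
      exact hmemball p hp
    ext
    simp only [h1]
    exact e.left_inv (hp.2.1)
  · intro y
    have h1 : e (e.symm (b y)) = b y := (hsymmU₀ (b y) (hbmem y)).2
    simp only [h1]
    apply b.left_inv
    rw [OpenPartialHomeomorph.univBall_source]; trivial
  · intro p
    have h1 : ContMDiffAt (𝓡 n) (𝓡 n) (⊤ : ℕ∞) (Subtype.val : O → M) p := contMDiff_subtype_val p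
    have h2 : ContMDiffAt (𝓡 n) (𝓡 n) (⊤ : ℕ∞) e p.1 :=
      contMDiffAt_of_mem_maximalAtlas hchart p.2.2.1
    have h3 : ContMDiffAt (𝓡 n) (𝓡 n) (⊤ : ℕ∞) b.symm (e p.1) :=
      ((contDiffOn_univBall_symm.contDiffAt
        (isOpen_ball.mem_nhds (hmemball p.1 p.2)))).contMDiffAt
    exact ContMDiffAt.comp (g := b.symm) p h3 (h2.comp p h1)
  · have hg' : ContMDiff (𝓡 n) (𝓡 n) (⊤ : ℕ∞) (fun y : E => e.symm (b y)) := by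
      intro y
      have h4 : ContMDiffAt (𝓡 n) (𝓡 n) (⊤ : ℕ∞) b y := contDiff_univBall.contMDiff y
      have h5 : ContMDiffAt (𝓡 n) (𝓡 n) (⊤ : ℕ∞) e.symm (b y) :=
        contMDiffAt_symm_of_mem_maximalAtlas hchart (himgt (hball (hbmem y)))
      exact h5.comp y h4
    exact contMDiff_codRestrict_opens (U := O)
      (fun y => (hsymmU₀ (b y) (hbmem y)).1) hg'

theorem finite_subset_has_disjoint_euclidean_neighborhoods
    (n : ℕ) (M : Type*) [TopologicalSpace M] [T2Space M]
    [ChartedSpace (EuclideanSpace ℝ (Fin n)) M]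
    [IsManifold (𝓡 n) (⊤ : ℕ∞) M] (s : Finset M) :
    ∃ U : M → TopologicalSpace.Opens M,
      (∀ x ∈ s, x ∈ U x) ∧
      (∀ x ∈ s, ∀ y ∈ s, x ≠ y → Disjoint ((U x : Set M)) ((U y : Set M))) ∧
      (∀ x ∈ s,
        Nonempty (Diffeomorph (𝓡 n) (𝓡 n) (U x) (EuclideanSpace ℝ (Fin n)) (⊤ : ℕ∞))) := by
  obtain ⟨V, hV, hVd⟩ := s.finite_toSet.t2_separation
  choose O hO1 hO2 hO3 using fun x : M => exists_euclidean_nbhd n x (hV x).2 (hV x).1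
  exact ⟨O, fun x _ => hO1 x,
    fun x hx y hy hxy => ((hVd hx hy hxy).mono (hO2 x) (hO2 y)),
    fun x _ => hO3 x⟩
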